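/- Let G be a bipartite simple graph in which every vertex has at most k neighbors, and let v be a vertex of G. If the graph obtained from G by deleting v (and all edges incident to v) has a proper edge coloring using k colors, then G has a proper edge coloring using k colors. -/

import Mathlib

/-- A proper edge coloring of a simple graph: distinct edges sharing an endpoint
get different colors. -/
def IsProperEdgeColoring {V α : Type*} (G : SimpleGraph V) (c : G.edgeSet → α) : Prop :=
  ∀ e₁ e₂ : G.edgeSet, e₁ ≠ e₂ →
    (∃ v, v ∈ (e₁ : Sym2 V) ∧ v ∈ (e₂ : Sym2 V)) → c e₁ ≠ c e₂

namespace KonigAux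

variable {V α : Type*}

/-- partial proper coloring of edges, as a function on all of `Sym2 V`. -/
def PC (G : SimpleGraph V) (f : Sym2 V → Option α) : Prop :=
  ∀ e₁ e₂ : Sym2 V, e₁ ∈ G.edgeSet → e₂ ∈ G.edgeSet → e₁ ≠ e₂ →
    (∃ w, w ∈ e₁ ∧ w ∈ e₂) → f e₁ ≠ none → f e₁ ≠ f e₂

/-- The Kempe subgraph of edges colored `a` or `b`. -/
def KG (G : SimpleGraph V) (f : Sym2 V → Option α) (a b : α) : SimpleGraph V where
  Adj x y := G.Adj x y ∧ (f s(x, y) = some a ∨ f s(x, y) = some b)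
  symm := ⟨fun x y h => ⟨h.1.symm, by rw [Sym2.eq_swap]; exact h.2⟩⟩
  loopless := ⟨fun x h => G.loopless.irrefl x h.1⟩

lemma kg_le {G : SimpleGraph V} {f : Sym2 V → Option α} {a b : α} {x y : V}
    (h : (KG G f a b).Adj x y) : G.Adj x y := h.1

def other [DecidableEq α] (a b col : α) : α := if col = a then b else a

/-- a walk whose edges alternate colors, starting with `col`. -/
def AltFrom [DecidableEq α] (f : Sym2 V → Option α) (a b : α) {H : SimpleGraph V} :
    ∀ {x y : V}, α → H.Walk x y → Prop
  | _, _, _, SimpleGraph.Walk.nil => True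
  | x, _, col, SimpleGraph.Walk.cons (v := z) _ q =>
      f s(x, z) = some col ∧ AltFrom f a b (other a b col) q

lemma exists_adj_eq {G : SimpleGraph V} {e : Sym2 V} {w : V}
    (he : e ∈ G.edgeSet) (hw : w ∈ e) : ∃ z, G.Adj w z ∧ e = s(w, z) := by
  induction e using Sym2.ind with
  | _ x y =>
    rw [Sym2.mem_iff] at hw
    rcases hw with rfl | rfl
    · exact ⟨y, he, rfl⟩
    · exact ⟨x, (G.mem_edgeSet.mp he).symm, Sym2.eq_swap⟩

lemma other_left [DecidableEq α] {a b : α} : other a b a = b := if_pos rfl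

lemma other_right [DecidableEq α] {a b : α} (hab : a ≠ b) : other a b b = a :=
  if_neg fun h => hab h.symm

lemma alt_of_path [DecidableEq α] {G : SimpleGraph V} {f : Sym2 V → Option α} {a b : α}
    (hpc : PC G f) (hab : a ≠ b) :
    ∀ {z y x : V} (q : (KG G f a b).Walk z y) (h : (KG G f a b).Adj x z),
      (SimpleGraph.Walk.cons h q).IsPath → ∀ col, f s(x, z) = some col →
      AltFrom f a b col (SimpleGraph.Walk.cons h q) := by
  intro z y x q
  induction q generalizing x with
  | nil =>
    intro h _ col hcol
    exact ⟨hcol, trivial⟩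
  | @cons z w y h' q'' IH =>
    intro h hp col hcol
    refine ⟨hcol, ?_⟩
    apply IH h' (hp.of_cons) (other a b col)
    have hxz : x ≠ z := (kg_le h).ne
    have hxw : x ≠ w := by
      intro hxw
      have hx : x ∉ (SimpleGraph.Walk.cons h' q'').support :=
        ((SimpleGraph.Walk.cons_isPath_iff _ _).mp hp).2
      apply hx
      rw [SimpleGraph.Walk.support_cons, hxw]
      exact List.mem_cons_of_mem _ q''.start_mem_support
    have hedge : s(x, z) ≠ s(z, w) := by
      intro heq
      rcases Sym2.eq_iff.mp heq with ⟨h1, _⟩ | ⟨h1, _⟩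
      · exact hxz h1
      · exact hxw h1
    have hne : f s(x, z) ≠ f s(z, w) := by
      apply hpc _ _ (G.mem_edgeSet.mpr (kg_le h)) (G.mem_edgeSet.mpr (kg_le h')) hedge
        ⟨z, by simp, by simp⟩
      rw [hcol]; exact Option.some_ne_none _
    have hcol1 : col = a ∨ col = b := by
      rcases h.2 with h2 | h2 <;> rw [hcol] at h2 <;>
        [exact Or.inl (Option.some_injective _ h2.symm).symm;
         exact Or.inr (Option.some_injective _ h2.symm).symm]
    rcases hcol1 with h1 | h1
    · have h2 : f s(z, w) = some b := by
        rcases h'.2 with h2 | h2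
        · exact absurd h2 (by rw [← h1, ← hcol]; exact hne.symm)
        · exact h2
      rw [h2, h1, other_left]
    · have h2 : f s(z, w) = some a := by
        rcases h'.2 with h2 | h2
        · exact h2
        · exact absurd h2 (by rw [← h1, ← hcol]; exact hne.symm)
      rw [h2, h1, other_right hab]

lemma alt_parity [DecidableEq α] {G : SimpleGraph V} {f : Sym2 V → Option α} {a b : α}
    {P : V → Bool} (hP : ∀ x y, G.Adj x y → P x ≠ P y) (hab : a ≠ b) :
    ∀ {x v : V} (q : (KG G f a b).Walk x v),
      (∀ y, G.Adj v y → f s(v, y) ≠ some a) → ∀ col, (col = a ∨ col = b) →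
      AltFrom f a b col q → q.length ≠ 0 → (P x ≠ P v ↔ col = b) := by
  intro x v q
  induction q with
  | nil => intro _ col _ _ hlen; exact absurd rfl hlen
  | @cons xx zz vv h q' IH =>
    intro hv col hcolab halt _
    obtain ⟨hcol, halt'⟩ := halt
    cases q' with
    | nil =>
      have hPx := hP _ _ (kg_le h)
      have hb : f s(xx, zz) = some b := by
        rcases h.2 with h2 | h2
        · exfalso
          apply hv xx (kg_le h).symm
          rwa [Sym2.eq_swap]
        · exact h2
      have hcb : col = b := by
        rw [hb] at hcol; exact (Option.some_injective _ hcol).symm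
      simp [hcb, hPx]
    | @cons zz' ww vv' h' q'' =>
      have hcolab' : other a b col = a ∨ other a b col = b := by
        rcases hcolab with h1 | h1 <;> rw [h1]
        · right; exact other_left
        · left; exact other_right hab
      have IH' := IH hv (other a b col) hcolab' halt' (by simp)
      have hPxz := hP _ _ (kg_le h)
      rcases hcolab with h1 | h1
      · have hzv := IH'.mpr (by rw [h1, other_left])
        have hxv : P xx = P vv := by
          revert hPxz hzv; cases P xx <;> cases P zz <;> cases P vv <;> decide
        simp [hxv, h1, hab]
      · have hzv : ¬ (P zz ≠ P vv) := by
          intro hzv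
          have h2 := IH'.mp hzv
          rw [h1, other_right hab] at h2
          exact hab h2
        have hxv : P xx ≠ P vv := by
          revert hPxz hzv; cases P xx <;> cases P zz <;> cases P vv <;> decide
        simp [hxv, h1]

lemma no_reach [DecidableEq α] [DecidableEq V] {G : SimpleGraph V} {f : Sym2 V → Option α}
    {a b : α} {P : V → Bool} (hP : ∀ x y, G.Adj x y → P x ≠ P y) (hpc : PC G f) (hab : a ≠ b)
    {v u : V} (hvu : G.Adj v u)
    (hv : ∀ y, G.Adj v y → f s(v, y) ≠ some a)
    (hu : ∀ y, G.Adj u y → f s(u, y) ≠ some b) :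
    ¬ (KG G f a b).Reachable u v := by
  intro hr
  obtain ⟨w⟩ := hr
  have hex : ∃ p : (KG G f a b).Walk u v, p.IsPath := ⟨w.bypass, w.bypass_isPath⟩
  obtain ⟨p, hp⟩ := hex
  cases p with
  | nil => exact hvu.ne rfl
  | @cons u z v h q =>
    have hfa : f s(u, z) = some a := by
      rcases h.2 with h2 | h2
      · exact h2
      · exact absurd h2 (hu z (kg_le h))
    have halt := alt_of_path hpc hab q h hp a hfa
    have hpar := alt_parity hP hab (SimpleGraph.Walk.cons h q) hv a (Or.inl rfl) halt
      (by simp)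
    have hPuv : P u ≠ P v := fun hh => hP v u hvu hh.symm
    exact hab (hpar.mp hPuv)

lemma reach_of_mem {G : SimpleGraph V} {f : Sym2 V → Option α} {a b : α} {u : V}
    {e : Sym2 V} (he : e ∈ G.edgeSet) (hf : f e = some a ∨ f e = some b)
    {z w : V} (hz : z ∈ e) (hw : w ∈ e) (hr : (KG G f a b).Reachable u z) :
    (KG G f a b).Reachable u w := by
  induction e using Sym2.ind with
  | _ x y =>
    have hadj : (KG G f a b).Adj x y := ⟨G.mem_edgeSet.mp he, hf⟩
    rw [Sym2.mem_iff] at hz hw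
    rcases hz with rfl | rfl <;> rcases hw with rfl | rfl
    · exact hr
    · exact hr.trans hadj.reachable
    · exact hr.trans hadj.symm.reachable
    · exact hr

open Classical in
/-- swap colors `a` and `b` on the Kempe component of `u`. -/
noncomputable def swapf (G : SimpleGraph V) (f : Sym2 V → Option α) (a b : α) (u : V) :
    Sym2 V → Option α :=
  fun e => if (f e = some a ∨ f e = some b) ∧ ∃ x ∈ e, (KG G f a b).Reachable u x
    then (if f e = some a then some b else some a) else f e

lemma swapf_none_iff {G : SimpleGraph V} {f : Sym2 V → Option α} {a b : α} {u : V}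
    {e : Sym2 V} : swapf G f a b u e = none ↔ f e = none := by
  unfold swapf
  split
  · rename_i hcond
    constructor
    · intro h
      exfalso
      split at h <;> simp at h
    · intro h
      rcases hcond.1 with h2 | h2 <;> rw [h] at h2 <;> simp at h2
  · rfl

lemma swapf_mem {G : SimpleGraph V} {f : Sym2 V → Option α} {a b : α} {u : V}
    {e : Sym2 V} (h : f e = some a ∨ f e = some b) :
    swapf G f a b u e = some a ∨ swapf G f a b u e = some b := by
  unfold swapf
  split
  · split
    · right; rfl
    · left; rfl
  · exact h.symm.imp_left id |>.symm

lemma swapf_not_mem {G : SimpleGraph V} {f : Sym2 V → Option α} {a b : α} {u : V}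
    {e : Sym2 V} (h : ¬(f e = some a ∨ f e = some b)) :
    swapf G f a b u e = f e := by
  unfold swapf
  rw [if_neg]
  intro hc
  exact h hc.1

lemma swapf_eq_of_a {G : SimpleGraph V} {f : Sym2 V → Option α} {a b : α} {u : V}
    {e : Sym2 V} (h1 : f e = some a) (hr : ∃ x ∈ e, (KG G f a b).Reachable u x) :
    swapf G f a b u e = some b := by
  unfold swapf
  have hc : (f e = some a ∨ f e = some b) ∧ ∃ x ∈ e, (KG G f a b).Reachable u x :=
    ⟨Or.inl h1, hr⟩
  rw [if_pos hc, if_pos h1]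

lemma swapf_eq_of_b {G : SimpleGraph V} {f : Sym2 V → Option α} {a b : α} {u : V}
    {e : Sym2 V} (hab : a ≠ b) (h1 : f e = some b) (hr : ∃ x ∈ e, (KG G f a b).Reachable u x) :
    swapf G f a b u e = some a := by
  unfold swapf
  have hc : (f e = some a ∨ f e = some b) ∧ ∃ x ∈ e, (KG G f a b).Reachable u x :=
    ⟨Or.inr h1, hr⟩
  rw [if_pos hc, if_neg]
  rw [h1]
  simp [Ne.symm hab]

lemma swapf_eq_of_not_reach {G : SimpleGraph V} {f : Sym2 V → Option α} {a b : α} {u : V}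
    {e : Sym2 V} (hnr : ¬ ∃ x ∈ e, (KG G f a b).Reachable u x) :
    swapf G f a b u e = f e := by
  unfold swapf
  rw [if_neg (fun hc => hnr hc.2)]

lemma pc_swapf {G : SimpleGraph V} {f : Sym2 V → Option α} {a b : α} {u : V}
    (hpc : PC G f) (hab : a ≠ b) : PC G (swapf G f a b u) := by
  intro e₁ e₂ he₁ he₂ hne hshare h1ne
  obtain ⟨w, hw1, hw2⟩ := hshare
  have hf1ne : f e₁ ≠ none := fun h => h1ne (swapf_none_iff.mpr h)
  by_cases c₁ : f e₁ = some a ∨ f e₁ = some b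
  · by_cases c₂ : f e₂ = some a ∨ f e₂ = some b
    · have hcnd : (∃ x ∈ e₁, (KG G f a b).Reachable u x) ↔
          (∃ x ∈ e₂, (KG G f a b).Reachable u x) := by
        constructor
        · rintro ⟨x, hx, hrx⟩
          exact ⟨w, hw2, reach_of_mem he₁ c₁ hx hw1 hrx⟩
        · rintro ⟨x, hx, hrx⟩
          exact ⟨w, hw1, reach_of_mem he₂ c₂ hx hw2 hrx⟩
      have hfne : f e₁ ≠ f e₂ := hpc e₁ e₂ he₁ he₂ hne ⟨w, hw1, hw2⟩ hf1ne
      by_cases hr : ∃ x ∈ e₁, (KG G f a b).Reachable u x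
      · have hr2 := hcnd.mp hr
        rcases c₁ with h1 | h1 <;> rcases c₂ with h2 | h2
        · exact absurd (h1.trans h2.symm) hfne
        · rw [swapf_eq_of_a h1 hr, swapf_eq_of_b hab h2 hr2]
          simp [Ne.symm hab]
        · rw [swapf_eq_of_b hab h1 hr, swapf_eq_of_a h2 hr2]
          simp [hab]
        · exact absurd (h1.trans h2.symm) hfne
      · rw [swapf_eq_of_not_reach hr, swapf_eq_of_not_reach (fun hc => hr (hcnd.mpr hc))]
        exact hfne
    · have h2 : swapf G f a b u e₂ = f e₂ := swapf_not_mem c₂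
      rcases swapf_mem (u := u) c₁ with h1 | h1 <;> rw [h1, h2] <;>
        [exact fun hc => c₂ (Or.inl hc.symm); exact fun hc => c₂ (Or.inr hc.symm)]
  · have h1 : swapf G f a b u e₁ = f e₁ := swapf_not_mem c₁
    by_cases c₂ : f e₂ = some a ∨ f e₂ = some b
    · rcases swapf_mem (u := u) c₂ with h2 | h2 <;> rw [h1, h2] <;>
        [exact fun hc => c₁ (Or.inl hc); exact fun hc => c₁ (Or.inr hc)]
    · rw [h1, swapf_not_mem c₂]
      exact hpc e₁ e₂ he₁ he₂ hne ⟨w, hw1, hw2⟩ hf1ne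

lemma swapf_at_v {G : SimpleGraph V} {f : Sym2 V → Option α} {a b : α} {u v : V}
    (hnr : ¬ (KG G f a b).Reachable u v) :
    ∀ y, G.Adj v y → swapf G f a b u s(v, y) = f s(v, y) := by
  intro y hy
  unfold swapf
  rw [if_neg]
  rintro ⟨hf, x, hx, hrx⟩
  exact hnr (reach_of_mem (G.mem_edgeSet.mpr hy) hf hx (Sym2.mem_mk_left _ _) hrx)

lemma swapf_at_u {G : SimpleGraph V} {f : Sym2 V → Option α} {a b : α} {u : V}
    (hab : a ≠ b) (hu : ∀ y, G.Adj u y → f s(u, y) ≠ some b) :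
    ∀ y, G.Adj u y → swapf G f a b u s(u, y) ≠ some a := by
  intro y hy
  unfold swapf
  split
  · rename_i hcond
    rcases hcond.1 with h1 | h1
    · rw [if_pos h1]
      simp [Ne.symm hab]
    · exact absurd h1 (hu y hy)
  · rename_i hcond
    intro hc
    exact hcond ⟨Or.inl hc, u, Sym2.mem_mk_left _ _, SimpleGraph.Reachable.refl u⟩

lemma extend {k : ℕ} [Fintype V] [DecidableEq V] (G : SimpleGraph V) [DecidableRel G.Adj]
    (v : V) (P : V → Bool) (hP : ∀ x y, G.Adj x y → P x ≠ P y)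
    (hdeg : ∀ u, G.degree u ≤ k) :
    ∀ (n : ℕ) (f : Sym2 V → Option (Fin k)),
      ((G.neighborFinset v).filter (fun y => f s(v, y) = none)).card = n →
      PC G f → (∀ e ∈ G.edgeSet, f e = none → v ∈ e) →
      ∃ c : G.edgeSet → Fin k, IsProperEdgeColoring G c := by
  intro n
  induction n using Nat.strong_induction_on with
  | _ n IH =>
  intro f hcard hpc hnone
  rcases Nat.eq_zero_or_pos n with hn | hn
  · -- base case: everything is colored
    subst hn
    have hall : ∀ e ∈ G.edgeSet, f e ≠ none := by
      intro e he h0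
      have hve : v ∈ e := hnone e he h0
      obtain ⟨z, hz, hez⟩ := exists_adj_eq he hve
      have hzmem : z ∈ (G.neighborFinset v).filter (fun y => f s(v, y) = none) :=
        Finset.mem_filter.mpr ⟨(G.mem_neighborFinset v z).mpr hz, by rw [← hez]; exact h0⟩
      rw [Finset.card_eq_zero] at hcard
      rw [hcard] at hzmem
      exact absurd hzmem (Finset.notMem_empty z)
    refine ⟨fun e => (f e.1).get (Option.ne_none_iff_isSome.mp (hall e.1 e.2)), ?_⟩
    intro e₁ e₂ hne hsh heq
    have h₁ := Option.ne_none_iff_isSome.mp (hall e₁.1 e₁.2)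
    have h₂ := Option.ne_none_iff_isSome.mp (hall e₂.1 e₂.2)
    apply hpc e₁.1 e₂.1 e₁.2 e₂.2 (fun h => hne (Subtype.ext h)) hsh (hall _ e₁.2)
    rw [← Option.some_get h₁, ← Option.some_get h₂]
    exact congrArg some heq
  · -- inductive step
    obtain ⟨u, hu⟩ := Finset.card_pos.mp (by rw [hcard]; exact hn)
    rw [Finset.mem_filter] at hu
    obtain ⟨hu1, hu2⟩ := hu
    have hvu : G.Adj v u := (G.mem_neighborFinset v u).mp hu1
    set usedF : V → Finset (Fin k) :=
      fun x => Finset.univ.filter (fun col : Fin k => ∃ y, G.Adj x y ∧ f s(x, y) = some col)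
      with husedF
    have hnotused : ∀ x col, col ∉ usedF x → ∀ y, G.Adj x y → f s(x, y) ≠ some col := by
      intro x col hcol y hy hsome
      exact hcol (Finset.mem_filter.mpr ⟨Finset.mem_univ _, ⟨y, hy, hsome⟩⟩)
    have husedcard : ∀ x : V, (usedF x).card ≤
        ((G.neighborFinset x).filter (fun y => ¬ f s(x, y) = none)).card := by
      intro x
      apply Finset.card_le_card_of_injOn
        (fun col => if h : ∃ y, G.Adj x y ∧ f s(x, y) = some col then h.choose else x)
      · intro col hcol
        rw [husedF, Finset.mem_coe, Finset.mem_filter] at hcol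
        have hex := hcol.2
        beta_reduce
        rw [dif_pos hex]
        have hspec := hex.choose_spec
        refine Finset.mem_filter.mpr ⟨(G.mem_neighborFinset x _).mpr hspec.1, ?_⟩
        rw [hspec.2]
        simp
      · intro c₁ h1 c₂ h2 heq
        rw [Finset.mem_coe, husedF, Finset.mem_filter] at h1 h2
        have hex1 := h1.2
        have hex2 := h2.2
        simp only [dif_pos hex1, dif_pos hex2] at heq
        have hs1 := hex1.choose_spec
        have hs2 := hex2.choose_spec
        have := hs1.2
        rw [heq] at this
        rw [hs2.2] at this
        exact (Option.some_injective _ this.symm)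
    have hsplit : ∀ x : V,
        ((G.neighborFinset x).filter (fun y => f s(x, y) = none)).card +
        ((G.neighborFinset x).filter (fun y => ¬ f s(x, y) = none)).card = G.degree x := by
      intro x
      rw [Finset.card_filter_add_card_filter_not]
      rfl
    -- a color missing at v
    have hv_lt : (usedF v).card < k := by
      have h1 := husedcard v
      have h2 := hsplit v
      have h3 := hdeg v
      omega
    have hu_lt : (usedF u).card < k := by
      have h1 := husedcard u
      have h2 := hsplit u
      have h3 := hdeg u
      have hvmem : v ∈ (G.neighborFinset u).filter (fun y => f s(u, y) = none) := by
        refine Finset.mem_filter.mpr ⟨(G.mem_neighborFinset u v).mpr hvu.symm, ?_⟩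
        rw [Sym2.eq_swap]
        exact hu2
      have h4 : 0 < ((G.neighborFinset u).filter (fun y => f s(u, y) = none)).card :=
        Finset.card_pos.mpr ⟨v, hvmem⟩
      omega
    have hmissing : ∀ x : V, (usedF x).card < k → ∃ col : Fin k, col ∉ usedF x := by
      intro x hx
      have : ((usedF x)ᶜ : Finset (Fin k)).Nonempty := by
        rw [← Finset.card_pos, Finset.card_compl]
        simp only [Fintype.card_fin]
        omega
      obtain ⟨col, hcol⟩ := this
      exact ⟨col, Finset.mem_compl.mp hcol⟩
    obtain ⟨a, ha⟩ := hmissing v hv_lt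
    -- the key step: once we have a color missing at both `v` and `u`, recurse
    have key : ∀ (f₂ : Sym2 V → Option (Fin k)) (col : Fin k),
        PC G f₂ → (∀ e ∈ G.edgeSet, f₂ e = none → v ∈ e) →
        ((G.neighborFinset v).filter (fun y => f₂ s(v, y) = none)).card = n →
        (∀ y, G.Adj v y → f₂ s(v, y) ≠ some col) →
        (∀ y, G.Adj u y → f₂ s(u, y) ≠ some col) →
        f₂ s(v, u) = none →
        ∃ c : G.edgeSet → Fin k, IsProperEdgeColoring G c := by
      intro f₂ col hpc₂ hnone₂ hcard₂ hv₂ hu₂ hvu₂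
      have hsym : ∀ y, s(v, y) = s(v, u) ↔ y = u := by
        intro y
        constructor
        · intro h
          rcases Sym2.eq_iff.mp h with ⟨_, h2⟩ | ⟨h1, _⟩
          · exact h2
          · exact absurd h1 hvu.ne
        · rintro rfl; rfl
      set g : Sym2 V → Option (Fin k) := fun e => if e = s(v, u) then some col else f₂ e
        with hg
      have hpcg : PC G g := by
        intro e₁ e₂ he₁ he₂ hne hsh h1ne
        obtain ⟨w, hw1, hw2⟩ := hsh
        by_cases h1 : e₁ = s(v, u)
        · by_cases h2 : e₂ = s(v, u)
          · exact absurd (h1.trans h2.symm) hne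
          · simp only [hg, if_pos h1, if_neg h2]
            subst h1
            intro heq
            rcases Sym2.mem_iff.mp hw1 with rfl | rfl
            · obtain ⟨z, hz, hez⟩ := exists_adj_eq he₂ hw2
              exact hv₂ z hz (by rw [← hez, ← heq])
            · obtain ⟨z, hz, hez⟩ := exists_adj_eq he₂ hw2
              exact hu₂ z hz (by rw [← hez, ← heq])
        · by_cases h2 : e₂ = s(v, u)
          · simp only [hg, if_neg h1, if_pos h2]
            subst h2
            intro heq
            rcases Sym2.mem_iff.mp hw2 with rfl | rfl
            · obtain ⟨z, hz, hez⟩ := exists_adj_eq he₁ hw1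
              exact hv₂ z hz (by rw [← hez]; exact heq)
            · obtain ⟨z, hz, hez⟩ := exists_adj_eq he₁ hw1
              exact hu₂ z hz (by rw [← hez]; exact heq)
          · simp only [hg, if_neg h1, if_neg h2] at h1ne ⊢
            exact hpc₂ e₁ e₂ he₁ he₂ hne ⟨w, hw1, hw2⟩ h1ne
      have hgfilter : (G.neighborFinset v).filter (fun y => g s(v, y) = none)
          = ((G.neighborFinset v).filter (fun y => f₂ s(v, y) = none)).erase u := by
        ext y
        rw [Finset.mem_erase, Finset.mem_filter, Finset.mem_filter]
        constructor
        · rintro ⟨hy, hgy⟩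
          have hyu : y ≠ u := by
            rintro rfl
            simp only [hg, if_pos rfl] at hgy
            exact Option.some_ne_none _ hgy
          refine ⟨hyu, hy, ?_⟩
          simp only [hg] at hgy
          rwa [if_neg (fun hc => hyu ((hsym y).mp hc))] at hgy
        · rintro ⟨hyu, hy, hfy⟩
          refine ⟨hy, ?_⟩
          simp only [hg]
          rwa [if_neg (fun hc => hyu ((hsym y).mp hc))]
      have hgcard : ((G.neighborFinset v).filter (fun y => g s(v, y) = none)).card = n - 1 := by
        rw [hgfilter, Finset.card_erase_of_mem, hcard₂]
        exact Finset.mem_filter.mpr ⟨hu1, hvu₂⟩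
      have hnoneg : ∀ e ∈ G.edgeSet, g e = none → v ∈ e := by
        intro e he hge
        simp only [hg] at hge
        by_cases hc : e = s(v, u)
        · rw [if_pos hc] at hge
          exact absurd hge (Option.some_ne_none _)
        · rw [if_neg hc] at hge
          exact hnone₂ e he hge
      exact IH (n - 1) (by omega) g hgcard hpcg hnoneg
    by_cases hcommon : ∃ col : Fin k, col ∉ usedF v ∧ col ∉ usedF u
    · obtain ⟨col, hc1, hc2⟩ := hcommon
      exact key f col hpc hnone hcard (hnotused v col hc1) (hnotused u col hc2) hu2
    · push_neg at hcommon
      have ha_u : a ∈ usedF u := hcommon a ha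
      obtain ⟨b, hb⟩ := hmissing u hu_lt
      have hab : a ≠ b := fun h => hb (h ▸ ha_u)
      have hv_a := hnotused v a ha
      have hu_b := hnotused u b hb
      have hnr := no_reach hP hpc hab hvu hv_a hu_b
      have hpc' := pc_swapf (u := u) hpc hab
      have hv'_a : ∀ y, G.Adj v y → swapf G f a b u s(v, y) ≠ some a := by
        intro y hy
        rw [swapf_at_v hnr y hy]
        exact hv_a y hy
      have hu'_a := swapf_at_u hab hu_b
      have hnone' : ∀ e ∈ G.edgeSet, swapf G f a b u e = none → v ∈ e :=
        fun e he h0 => hnone e he (swapf_none_iff.mp h0)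
      have hcard' : ((G.neighborFinset v).filter
          (fun y => swapf G f a b u s(v, y) = none)).card = n := by
        rw [← hcard]
        congr 1
        ext y
        simp only [Finset.mem_filter, swapf_none_iff]
      have hvu' : swapf G f a b u s(v, u) = none := swapf_none_iff.mpr hu2
      exact key (swapf G f a b u) a hpc' hnone' hcard' hv'_a hu'_a hvu'

end KonigAux

/-- If a bipartite graph `G` has max degree at most `k` and `G` minus a vertex `v`
has a proper edge coloring with `k` colors, then so does `G`. -/
theorem konig_extend_coloring {V : Type*} [Fintype V] (G : SimpleGraph V)
    [DecidableRel G.Adj] {k : ℕ} (v : V)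
    (hbip : ∃ P : V → Bool, ∀ u w, G.Adj u w → P u ≠ P w)
    (hdeg : ∀ u, G.degree u ≤ k)
    (hcol : ∃ c : (G.induce {v}ᶜ).edgeSet → Fin k,
      IsProperEdgeColoring (G.induce {v}ᶜ) c) :
    ∃ c : G.edgeSet → Fin k, IsProperEdgeColoring G c := by
  classical
  obtain ⟨P, hP⟩ := hbip
  obtain ⟨c, hc⟩ := hcol
  -- transfer the coloring of `G - v` to a partial coloring of `G`
  set D : Sym2 V → Prop :=
    fun e => ∃ e' : (G.induce ({v}ᶜ : Set V)).edgeSet, Sym2.map Subtype.val e'.1 = e with hD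
  set f : Sym2 V → Option (Fin k) :=
    fun e => if h : D e then some (c h.choose) else none with hf
  have hval : ∀ (e : Sym2 V) (h : D e), f e = some (c h.choose) := by
    intro e h
    simp only [hf, dif_pos h]
  have hnone : ∀ e ∈ G.edgeSet, f e = none → v ∈ e := by
    intro e he h0
    by_contra hve
    induction e using Sym2.ind with
    | _ x y =>
      have hadj : G.Adj x y := G.mem_edgeSet.mp he
      rw [Sym2.mem_iff] at hve
      push_neg at hve
      have hx : x ∈ ({v}ᶜ : Set V) := Set.mem_compl_singleton_iff.mpr (fun h => hve.1 h.symm)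
      have hy : y ∈ ({v}ᶜ : Set V) := Set.mem_compl_singleton_iff.mpr (fun h => hve.2 h.symm)
      have hadj' : (G.induce ({v}ᶜ : Set V)).Adj ⟨x, hx⟩ ⟨y, hy⟩ := by
        simp only [SimpleGraph.comap_adj, Function.Embedding.coe_subtype]
        exact hadj
      have hDe : D s(x, y) :=
        ⟨⟨s(⟨x, hx⟩, ⟨y, hy⟩), (G.induce ({v}ᶜ : Set V)).mem_edgeSet.mpr hadj'⟩,
          Sym2.map_pair_eq _ _ _⟩
      rw [hval _ hDe] at h0
      exact Option.some_ne_none _ h0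
  have hpc : KonigAux.PC G f := by
    intro e₁ e₂ he₁ he₂ hne hsh h1ne
    have hD1 : D e₁ := by
      by_contra hD1
      exact h1ne (by simp only [hf, dif_neg hD1])
    rw [hval e₁ hD1]
    by_cases hD2 : D e₂
    · rw [hval e₂ hD2]
      intro heq
      have heq' : c hD1.choose = c hD2.choose := Option.some_injective _ heq
      have hs1 := hD1.choose_spec
      have hs2 := hD2.choose_spec
      have hne' : hD1.choose ≠ hD2.choose := by
        intro h
        rw [h, hs2] at hs1
        exact hne hs1.symm
      obtain ⟨w, hw1, hw2⟩ := hsh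
      rw [← hs1] at hw1
      rw [← hs2] at hw2
      rw [Sym2.mem_map] at hw1 hw2
      obtain ⟨w₁, hw₁, hww₁⟩ := hw1
      obtain ⟨w₂, hw₂, hww₂⟩ := hw2
      have : w₁ = w₂ := Subtype.ext (hww₁.trans hww₂.symm)
      exact hc hD1.choose hD2.choose hne' ⟨w₁, hw₁, this ▸ hw₂⟩ heq'
    · simp only [hf, dif_neg hD2]
      exact fun h => Option.some_ne_none _ h
  exact KonigAux.extend G v P hP hdeg _ f rfl hpc hnone
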